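/- Triangle inequality for the interventional information loss (IIL) error under composition of abstractions: D(μ, α_Y⁺·β_Y⁺·μ''·β_X·α_X) ≤ D(μ, α_Y⁺·μ'·α_X) + D(μ', β_Y⁺·μ''·β_X), where γ⁺ = γᵀ·(γ·γᵀ)⁻¹ denotes the pseudo-inverse of an abstraction matrix γ. -/

import Mathlib

open Finset Matrix

noncomputable section

/-- A probability vector on a finite type: nonnegative entries summing to 1. -/
def IsProbVec {X : Type*} [Fintype X] (p : X → ℝ) : Prop :=
  (∀ x, 0 ≤ p x) ∧ ∑ x, p x = 1

/-- Kullback–Leibler divergence, with the convention that terms with `p x = 0`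
contribute `0`. -/
noncomputable def KL {X : Type*} [Fintype X] (p q : X → ℝ) : ℝ :=
  ∑ x, if p x = 0 then 0 else p x * Real.log (p x / q x)

/-- Jensen–Shannon distance. -/
noncomputable def JSD {X : Type*} [Fintype X] (p q : X → ℝ) : ℝ :=
  Real.sqrt ((1 / 2) * KL p (fun x => (p x + q x) / 2)
    + (1 / 2) * KL q (fun x => (p x + q x) / 2))

/-- A column-stochastic matrix: nonnegative entries, every column sums to 1. -/
def IsColStoch {Y X : Type*} [Fintype Y] [Fintype X] (M : Matrix Y X ℝ) : Prop :=
  (∀ y x, 0 ≤ M y x) ∧ ∀ x, ∑ y, M y x = 1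

/-- The sup-JSD distance between two matrices of the same shape:
the maximum over columns of the JSD between corresponding columns. -/
noncomputable def supJSD {Y X : Type*} [Fintype Y] [Fintype X] [Nonempty X]
    (M N : Matrix Y X ℝ) : ℝ :=
  Finset.univ.sup' Finset.univ_nonempty fun x => JSD (fun y => M y x) (fun y => N y x)

/-- An abstraction matrix: entries in {0,1}, every column contains exactly one 1,
and every row contains at least one 1. -/
def IsAbsMatrix {N M : Type*} [Fintype N] [Fintype M] (α : Matrix N M ℝ) : Prop :=
  (∀ j i, α j i = 0 ∨ α j i = 1) ∧ (∀ i, ∃! j, α j i = 1) ∧ (∀ j, ∃ i, α j i = 1)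

/-- The pseudo-inverse `α⁺ = αᵀ·(α·αᵀ)⁻¹` of an abstraction matrix. -/
noncomputable def pinv {N M : Type*} [Fintype N] [Fintype M] [DecidableEq N]
    (α : Matrix N M ℝ) : Matrix M N ℝ :=
  αᵀ * (α * αᵀ)⁻¹


/-- Per-coordinate Jensen-Shannon term. -/
noncomputable def phi (a b : ℝ) : ℝ :=
  (a * Real.log (a / ((a + b) / 2)) + b * Real.log (b / ((a + b) / 2))) / 2

lemma mul_log_div_ge {a m : ℝ} (ha : 0 ≤ a) (hm : 0 < m) :
    a - m ≤ a * Real.log (a / m) := by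
  rcases eq_or_lt_of_le ha with h | h
  · simp [← h, hm.le]
  · have h1 : Real.log (m / a) ≤ m / a - 1 :=
      Real.log_le_sub_one_of_pos (by positivity)
    have h2 : Real.log (a / m) = -Real.log (m / a) := by
      rw [← Real.log_inv]; congr 1; rw [inv_div]
    have key : a * (m / a - 1) = m - a := by field_simp
    have h3 := mul_le_mul_of_nonneg_left h1 ha
    rw [h2, mul_neg]
    linarith

lemma mul_log_div_gt {a m : ℝ} (ha : 0 ≤ a) (hm : 0 < m) (hne : a ≠ m) :
    a - m < a * Real.log (a / m) := by
  rcases eq_or_lt_of_le ha with h | h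
  · simp [← h]; linarith
  · have h1 : Real.log (m / a) < m / a - 1 := by
      refine Real.log_lt_sub_one_of_pos (by positivity) ?_
      intro hc
      exact hne (by field_simp at hc; linarith)
    have h2 : Real.log (a / m) = -Real.log (m / a) := by
      rw [← Real.log_inv]; congr 1; rw [inv_div]
    have key : a * (m / a - 1) = m - a := by field_simp
    have h3 := mul_lt_mul_of_pos_left h1 h
    rw [h2, mul_neg]
    linarith

lemma phi_nonneg {a b : ℝ} (ha : 0 ≤ a) (hb : 0 ≤ b) : 0 ≤ phi a b := by
  rcases eq_or_lt_of_le (add_nonneg ha hb) with h | h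
  · have ha0 : a = 0 := by linarith [ha, hb]
    have hb0 : b = 0 := by linarith
    simp [phi, ha0, hb0]
  · have hm : 0 < (a + b) / 2 := by linarith
    have h1 := mul_log_div_ge ha hm
    have h2 := mul_log_div_ge hb hm
    unfold phi; linarith

lemma phi_pos {a b : ℝ} (ha : 0 ≤ a) (hb : 0 ≤ b) (hab : a ≠ b) : 0 < phi a b := by
  have hm : 0 < (a + b) / 2 := by
    rcases eq_or_lt_of_le ha with h | h
    · rcases eq_or_lt_of_le hb with h' | h'
      · exact absurd (h'.symm.trans h.symm.symm).symm (by simpa [← h] using hab)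
      · linarith
    · linarith
  have h1 := mul_log_div_gt ha hm (fun hc => hab (by linarith [hc]))
  have h2 := mul_log_div_gt hb hm (fun hc => hab (by linarith [hc]))
  unfold phi; linarith

lemma phi_comm (a b : ℝ) : phi a b = phi b a := by
  unfold phi; rw [add_comm a b]; ring

lemma phi_self (a : ℝ) : phi a a = 0 := by
  rcases eq_or_ne a 0 with h | h
  · simp [phi, h]
  · unfold phi
    rw [show (a + a) / 2 = a by ring, div_self h, Real.log_one]
    ring

lemma phi_zero_left {x : ℝ} (hx : 0 ≤ x) : phi 0 x = x * Real.log 2 / 2 := by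
  rcases eq_or_ne x 0 with h | h
  · simp [phi, h]
  · unfold phi
    rw [show (0 + x) / 2 = x / 2 by ring, show x / (x / 2) = 2 by field_simp]
    simp

lemma phi_homog {t : ℝ} (ht : 0 < t) (a b : ℝ) : phi (t * a) (t * b) = t * phi a b := by
  unfold phi
  rw [show (t * a + t * b) / 2 = t * ((a + b) / 2) by ring,
    mul_div_mul_left a _ ht.ne', mul_div_mul_left b _ ht.ne']
  ring

lemma phi_eq_aux {q : ℝ} (x : ℝ) (hxq : 0 < x + q) :
    phi x q = (x * Real.log x - x * Real.log ((x + q) / 2)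
      + (q * Real.log q - q * Real.log ((x + q) / 2))) / 2 := by
  have hm : ((x + q) / 2) ≠ 0 := by positivity
  unfold phi
  congr 2
  · rcases eq_or_ne x 0 with h | h
    · simp [h]
    · rw [Real.log_div h hm]; ring
  · rcases eq_or_ne q 0 with h | h
    · simp [h]
    · rw [Real.log_div h hm]; ring

lemma continuousOn_phi {q : ℝ} :
    ContinuousOn (fun x => phi x q) {x : ℝ | 0 ≤ x ∧ 0 < x + q} := by
  have : ContinuousOn (fun x => (x * Real.log x - x * Real.log ((x + q) / 2)
      + (q * Real.log q - q * Real.log ((x + q) / 2))) / 2)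
      {x : ℝ | 0 ≤ x ∧ 0 < x + q} := by
    have hlog : ContinuousOn (fun x : ℝ => Real.log ((x + q) / 2))
        {x : ℝ | 0 ≤ x ∧ 0 < x + q} := by
      apply ContinuousOn.log
      · fun_prop
      · intro x hx
        have h2 : 0 < (x + q) / 2 := by linarith [hx.2]
        exact h2.ne'
    have hml : ContinuousOn (fun x : ℝ => x * Real.log x)
        {x : ℝ | 0 ≤ x ∧ 0 < x + q} := Real.continuous_mul_log.continuousOn
    exact ((hml.sub (continuousOn_id.mul hlog)).add
      (continuousOn_const.sub (continuousOn_const.mul hlog))).div_const 2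
  exact this.congr (fun x hx => phi_eq_aux x hx.2)

lemma hasDerivAt_phi {q x : ℝ} (hx : 0 < x) (hq : 0 ≤ q) :
    HasDerivAt (fun y => phi y q) (Real.log (x / ((x + q) / 2)) / 2) x := by
  have hm : 0 < (x + q) / 2 := by linarith
  have h2 : HasDerivAt (fun y : ℝ => (y + q) / 2) (1 / 2) x := by
    simpa using ((hasDerivAt_id x).add_const q).div_const 2
  have h3 : HasDerivAt (fun y : ℝ => Real.log ((y + q) / 2)) ((1 / 2) / ((x + q) / 2)) x :=
    h2.log hm.ne'
  have h1 : HasDerivAt (fun y : ℝ => y * Real.log y) (Real.log x + 1) x :=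
    Real.hasDerivAt_mul_log hx.ne'
  have h4 : HasDerivAt (fun y : ℝ => y * Real.log ((y + q) / 2))
      (1 * Real.log ((x + q) / 2) + x * ((1 / 2) / ((x + q) / 2))) x :=
    (hasDerivAt_id x).mul h3
  have h5 : HasDerivAt (fun y : ℝ => q * Real.log q - q * Real.log ((y + q) / 2))
      (0 - q * ((1 / 2) / ((x + q) / 2))) x :=
    (hasDerivAt_const x _).sub (h3.const_mul q)
  have hG : HasDerivAt (fun y : ℝ => (y * Real.log y - y * Real.log ((y + q) / 2)
      + (q * Real.log q - q * Real.log ((y + q) / 2))) / 2)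
      (((Real.log x + 1) - (1 * Real.log ((x + q) / 2) + x * ((1 / 2) / ((x + q) / 2)))
        + (0 - q * ((1 / 2) / ((x + q) / 2)))) / 2) x :=
    ((h1.sub h4).add h5).div_const 2
  have heq : (fun y => phi y q) =ᶠ[nhds x] (fun y : ℝ => (y * Real.log y
      - y * Real.log ((y + q) / 2)
      + (q * Real.log q - q * Real.log ((y + q) / 2))) / 2) :=
    (eventually_gt_nhds (show -q < x by linarith)).mono
      (fun y hy => phi_eq_aux y (by linarith))
  have hG' := hG.congr_of_eventuallyEq heq
  refine hG'.congr_deriv ?_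
  symm
  rw [Real.log_div hx.ne' hm.ne']
  field_simp
  ring

lemma phi_anti {c : ℝ} (hc : 0 < c) : AntitoneOn (fun x => phi x c) (Set.Icc 0 c) := by
  apply antitoneOn_of_deriv_nonpos (convex_Icc 0 c)
  · exact continuousOn_phi.mono (fun x hx => ⟨hx.1, by have := hx.1; linarith⟩)
  · rw [interior_Icc]
    intro x hx
    exact (hasDerivAt_phi hx.1 hc.le).differentiableAt.differentiableWithinAt
  · rw [interior_Icc]
    intro x hx
    rw [(hasDerivAt_phi hx.1 hc.le).deriv]
    have hm : 0 < (x + c) / 2 := by linarith [hx.1]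
    have : x / ((x + c) / 2) ≤ 1 := by
      rw [div_le_one hm]; linarith [hx.2]
    have h0 : 0 ≤ x / ((x + c) / 2) := by
      apply div_nonneg hx.1.le hm.le
    have := Real.log_nonpos h0 this
    linarith

lemma phi_mono {a : ℝ} (ha : 0 < a) : MonotoneOn (fun x => phi x a) (Set.Ici a) := by
  apply monotoneOn_of_deriv_nonneg (convex_Ici a)
  · exact continuousOn_phi.mono (fun x hx => by
      have : a ≤ x := hx
      constructor <;> [linarith; linarith])
  · rw [interior_Ici]
    intro x hx
    have hx0 : 0 < x := lt_trans ha hx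
    exact (hasDerivAt_phi hx0 ha.le).differentiableAt.differentiableWithinAt
  · rw [interior_Ici]
    intro x hx
    have hx0 : 0 < x := lt_trans ha hx
    rw [(hasDerivAt_phi hx0 ha.le).deriv]
    have hm : 0 < (x + a) / 2 := by linarith
    have : 1 ≤ x / ((x + a) / 2) := by
      rw [le_div_iff₀ hm]; have : a < x := hx; linarith
    have := Real.log_nonneg this
    linarith

/-- Auxiliary function for the Endres–Schindelin argument. -/
noncomputable def Hf (u : ℝ) : ℝ :=
  -(Real.log u * Real.log (2 - u)) - u * Real.log u - (2 - u) * Real.log (2 - u)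

lemma sub_one_le_mul_log {u : ℝ} (h : 0 < u) : u - 1 ≤ u * Real.log u := by
  have h1 : Real.log u⁻¹ ≤ u⁻¹ - 1 := Real.log_le_sub_one_of_pos (by positivity)
  rw [Real.log_inv] at h1
  have h2 : Real.log u ≥ 1 - u⁻¹ := by linarith
  have h3 := mul_le_mul_of_nonneg_left h2 h.le
  have key : u * (1 - u⁻¹) = u - 1 := by field_simp
  nlinarith

lemma K_nonneg {u : ℝ} (h0 : 0 < u) (h2 : u < 2) :
    0 ≤ u * Real.log u + (2 - u) * Real.log (2 - u) := by
  have a1 := sub_one_le_mul_log h0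
  have a2 := sub_one_le_mul_log (show (0:ℝ) < 2 - u by linarith)
  linarith

lemma hasDerivAt_Hf {u : ℝ} (h0 : 0 < u) (h2 : u < 2) :
    HasDerivAt Hf
      (-(u⁻¹ * Real.log (2 - u) + Real.log u * (-1 / (2 - u)))
        - (Real.log u + 1)
        - ((-1) * Real.log (2 - u) + (2 - u) * (-1 / (2 - u)))) u := by
  have hu : u ≠ 0 := h0.ne'
  have h2u : (2 : ℝ) - u ≠ 0 := by intro h; linarith
  have l1 : HasDerivAt Real.log u⁻¹ u := Real.hasDerivAt_log hu
  have lsub : HasDerivAt (fun y : ℝ => 2 - y) (-1) u := by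
    simpa using (hasDerivAt_id' u).const_sub (2:ℝ)
  have l2 : HasDerivAt (fun y : ℝ => Real.log (2 - y)) (-1 / (2 - u)) u := lsub.log h2u
  have m1 : HasDerivAt (fun y : ℝ => Real.log y * Real.log (2 - y))
      (u⁻¹ * Real.log (2 - u) + Real.log u * (-1 / (2 - u))) u := l1.mul l2
  have m2 : HasDerivAt (fun y : ℝ => y * Real.log y) (Real.log u + 1) u :=
    Real.hasDerivAt_mul_log hu
  have m3 : HasDerivAt (fun y : ℝ => (2 - y) * Real.log (2 - y))
      ((-1) * Real.log (2 - u) + (2 - u) * (-1 / (2 - u))) u := lsub.mul l2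
  exact (m1.neg.sub m2).sub m3

lemma Hf_nonneg {u : ℝ} (h0 : 0 < u) (h1 : u ≤ 1) : 0 ≤ Hf u := by
  have hH1 : Hf 1 = 0 := by norm_num [Hf]
  rcases eq_or_lt_of_le h1 with h | h
  · rw [h, hH1]
  · have anti : AntitoneOn Hf (Set.Icc u 1) := by
      apply antitoneOn_of_deriv_nonpos (convex_Icc u 1)
      · intro x hx
        have hx0 : 0 < x := lt_of_lt_of_le h0 hx.1
        have hx2 : x < 2 := by have := hx.2; linarith
        exact (hasDerivAt_Hf hx0 hx2).continuousAt.continuousWithinAt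
      · rw [interior_Icc]
        intro x hx
        have hx0 : 0 < x := lt_trans h0 hx.1
        have hx2 : x < 2 := by have := hx.2; linarith
        exact (hasDerivAt_Hf hx0 hx2).differentiableAt.differentiableWithinAt
      · rw [interior_Icc]
        intro x hx
        have hx0 : 0 < x := lt_trans h0 hx.1
        have hx1 : x < 1 := hx.2
        have hx2 : x < 2 := by linarith
        have h2x : (0:ℝ) < 2 - x := by linarith
        rw [(hasDerivAt_Hf hx0 hx2).deriv]
        have hiden : -(x⁻¹ * Real.log (2 - x) + Real.log x * (-1 / (2 - x)))
            - (Real.log x + 1)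
            - ((-1) * Real.log (2 - x) + (2 - x) * (-1 / (2 - x)))
            = -((1 - x) / (x * (2 - x))) * (x * Real.log x + (2 - x) * Real.log (2 - x)) := by
          field_simp
          ring
        rw [hiden]
        apply mul_nonpos_of_nonpos_of_nonneg
        · have : 0 < (1 - x) / (x * (2 - x)) :=
            div_pos (by linarith) (mul_pos hx0 h2x)
          linarith
        · exact K_nonneg hx0 hx2
    have := anti (Set.mem_Icc.mpr ⟨le_refl u, h1⟩) (Set.mem_Icc.mpr ⟨h.le, le_refl 1⟩) h.le
    rw [hH1] at this
    exact this

lemma key_ineq {x q : ℝ} (hx : 0 < x) (hxq : x < q) :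
    4 * phi x q ≤ (x + q) * (Real.log (2 * q / (x + q)) * Real.log ((x + q) / (2 * x))) := by
  have hq : 0 < q := lt_trans hx hxq
  have hm : 0 < (x + q) / 2 := by linarith
  have hmne : (x + q) / 2 ≠ 0 := hm.ne'
  have hu0 : 0 < x / ((x + q) / 2) := by positivity
  have hu1 : x / ((x + q) / 2) < 1 := by
    rw [div_lt_one hm]; linarith
  obtain ⟨m, u, hm0, hu0', hu1', hx_eq, hq_eq⟩ :
      ∃ m u : ℝ, 0 < m ∧ 0 < u ∧ u < 1 ∧ x = m * u ∧ q = m * (2 - u) := by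
    refine ⟨(x + q) / 2, x / ((x + q) / 2), hm, hu0, hu1, by field_simp, ?_⟩
    field_simp
    ring
  rw [hx_eq, hq_eq]
  rw [show m * u + m * (2 - u) = 2 * m by ring]
  have hune : u ≠ 0 := hu0'.ne'
  have hmne' : m ≠ 0 := hm0.ne'
  rw [show 2 * (m * (2 - u)) / (2 * m) = 2 - u by field_simp]
  rw [show 2 * m / (2 * (m * u)) = u⁻¹ by field_simp]
  rw [Real.log_inv, phi_homog hm0]
  have e2 : phi u (2 - u) = (u * Real.log u + (2 - u) * Real.log (2 - u)) / 2 := by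
    unfold phi
    rw [show (u + (2 - u)) / 2 = 1 by ring, div_one, div_one]
  have hHf := Hf_nonneg hu0' hu1'.le
  unfold Hf at hHf
  rw [e2]
  nlinarith [hm0, hHf]

lemma hasDerivAt_F {q x : ℝ} (hx0 : 0 < x) (hxq : x < q) :
    HasDerivAt (fun y => Real.log (2 * q / (y + q)) ^ 2 / phi y q)
      ((2 * Real.log (2 * q / (x + q)) * (-(x + q)⁻¹) * phi x q
        - Real.log (2 * q / (x + q)) ^ 2 * (Real.log (x / ((x + q) / 2)) / 2))
        / (phi x q) ^ 2) x := by
  have hq : 0 < q := lt_trans hx0 hxq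
  have hsq : 0 < x + q := by linarith
  have hphi : 0 < phi x q := phi_pos hx0.le hq.le (ne_of_lt hxq)
  have hL : HasDerivAt (fun y : ℝ => Real.log (2 * q / (y + q))) (-(x + q)⁻¹) x := by
    have hbase : HasDerivAt (fun y : ℝ => Real.log (2 * q) - Real.log (y + q))
        (0 - 1 / (x + q)) x := by
      have hlog : HasDerivAt (fun y : ℝ => Real.log (y + q)) (1 / (x + q)) x :=
        ((hasDerivAt_id x).add_const q).log hsq.ne'
      exact (hasDerivAt_const x _).sub hlog
    have heq : (fun y : ℝ => Real.log (2 * q / (y + q)))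
        =ᶠ[nhds x] (fun y : ℝ => Real.log (2 * q) - Real.log (y + q)) :=
      (eventually_gt_nhds (show -q < x by linarith)).mono (fun y hy => by
        show Real.log (2 * q / (y + q)) = Real.log (2 * q) - Real.log (y + q)
        rw [Real.log_div (by positivity) (ne_of_gt (show (0:ℝ) < y + q by linarith))])
    have := hbase.congr_of_eventuallyEq heq
    refine this.congr_deriv ?_
    ring
  have hL2 : HasDerivAt (fun y : ℝ => Real.log (2 * q / (y + q)) ^ 2)
      (2 * Real.log (2 * q / (x + q)) * (-(x + q)⁻¹)) x := by
    have := hL.pow 2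
    norm_num at this
    refine this.congr_deriv ?_
    ring
  exact hL2.div (hasDerivAt_phi hx0 hq.le) hphi.ne'

lemma F_mono {q p r : ℝ} (hq : 0 < q) (hp : 0 ≤ p) (hpr : p ≤ r) (hr : r < q) :
    Real.log (2 * q / (p + q)) ^ 2 / phi p q
      ≤ Real.log (2 * q / (r + q)) ^ 2 / phi r q := by
  rcases eq_or_lt_of_le hpr with h | hlt
  · rw [h]
  · have mono : MonotoneOn (fun x => Real.log (2 * q / (x + q)) ^ 2 / phi x q)
        (Set.Icc p r) := by
      apply monotoneOn_of_deriv_nonneg (convex_Icc p r)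
      · apply ContinuousOn.div
        · apply ContinuousOn.pow
          apply ContinuousOn.log
          · apply ContinuousOn.div continuousOn_const (by fun_prop)
            intro x hx
            have h0 : 0 ≤ x := le_trans hp hx.1
            exact ne_of_gt (show (0:ℝ) < x + q by linarith)
          · intro x hx
            have h1 : 0 ≤ x := le_trans hp hx.1
            have h2 : 0 < x + q := by linarith
            exact (div_pos (by linarith) h2).ne'
        · exact continuousOn_phi.mono (fun x hx =>
            ⟨le_trans hp hx.1, by linarith [le_trans hp hx.1]⟩)
        · intro x hx
          exact (phi_pos (le_trans hp hx.1) hq.le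
            (ne_of_lt (lt_of_le_of_lt hx.2 hr))).ne'
      · rw [interior_Icc]
        intro x hx
        have hx0 : 0 < x := lt_of_le_of_lt hp hx.1
        have hxq : x < q := lt_trans hx.2 hr
        exact (hasDerivAt_F hx0 hxq).differentiableAt.differentiableWithinAt
      · rw [interior_Icc]
        intro x hx
        have hx0 : 0 < x := lt_of_le_of_lt hp hx.1
        have hxq : x < q := lt_trans hx.2 hr
        have hsq : 0 < x + q := by linarith
        have hphi : 0 < phi x q := phi_pos hx0.le hq.le (ne_of_lt hxq)
        rw [(hasDerivAt_F hx0 hxq).deriv]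
        have hA : 0 ≤ Real.log (2 * q / (x + q)) := by
          apply Real.log_nonneg
          rw [le_div_iff₀ hsq]; linarith
        have hC : Real.log (x / ((x + q) / 2)) = -Real.log ((x + q) / (2 * x)) := by
          rw [← Real.log_inv]
          congr 1
          rw [inv_div]
          field_simp
        rw [hC]
        set A := Real.log (2 * q / (x + q)) with hA_def
        set B := Real.log ((x + q) / (2 * x)) with hB_def
        have key := key_ineq hx0 hxq
        apply div_nonneg _ (sq_nonneg _)
        have h6 : 0 ≤ A * ((x + q) * (A * B) - 4 * phi x q) :=
          mul_nonneg hA (by linarith)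
        have hprod : (2 * A * (-(x + q)⁻¹) * phi x q - A ^ 2 * (-B / 2)) * (x + q)
            = A * ((x + q) * (A * B) - 4 * phi x q) / 2 + A * phi x q
              - A * phi x q := by
          field_simp
          ring
        have h8 : (0:ℝ) * (x + q) ≤ (2 * A * (-(x + q)⁻¹) * phi x q
            - A ^ 2 * (-B / 2)) * (x + q) := by
          rw [zero_mul, hprod]; linarith
        exact le_of_mul_le_mul_right h8 hsq
    exact mono (Set.mem_Icc.mpr ⟨le_refl p, hpr⟩) (Set.mem_Icc.mpr ⟨hpr, le_refl r⟩) hpr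

lemma mid_case {a b c : ℝ} (ha : 0 ≤ a) (hab : a < b) (hbc : b < c) :
    Real.sqrt (phi a c) ≤ Real.sqrt (phi a b) + Real.sqrt (phi b c) := by
  have hb : 0 < b := lt_of_le_of_lt ha hab
  have mono : MonotoneOn (fun t => Real.sqrt (phi t b) - Real.sqrt (phi t a))
      (Set.Icc b c) := by
    apply monotoneOn_of_deriv_nonneg (convex_Icc b c)
    · apply ContinuousOn.sub
      · exact Real.continuous_sqrt.comp_continuousOn
          (continuousOn_phi.mono (fun x hx => ⟨le_trans hb.le hx.1, by
            have := hx.1; linarith⟩))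
      · exact Real.continuous_sqrt.comp_continuousOn
          (continuousOn_phi.mono (fun x hx => ⟨le_trans hb.le hx.1, by
            have := hx.1; linarith⟩))
    · rw [interior_Icc]
      intro t ht
      have ht0 : 0 < t := lt_trans hb ht.1
      have hd1 := (hasDerivAt_phi ht0 hb.le).sqrt
        (phi_pos ht0.le hb.le (ne_of_gt ht.1)).ne'
      have hd2 := (hasDerivAt_phi ht0 ha).sqrt
        (phi_pos ht0.le ha (ne_of_gt (lt_trans hab ht.1))).ne'
      exact (hd1.sub hd2).differentiableAt.differentiableWithinAt
    · rw [interior_Icc]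
      intro t ht
      have ht0 : 0 < t := lt_trans hb ht.1
      have hphib : 0 < phi t b := phi_pos ht0.le hb.le (ne_of_gt ht.1)
      have hphia : 0 < phi t a := phi_pos ht0.le ha (ne_of_gt (lt_trans hab ht.1))
      have hd1 := (hasDerivAt_phi ht0 hb.le).sqrt hphib.ne'
      have hd2 := (hasDerivAt_phi ht0 ha).sqrt hphia.ne'
      have hsub : HasDerivAt (fun t => √(phi t b) - √(phi t a)) _ t := hd1.sub hd2
      rw [hsub.deriv]
      have hFb : Real.log (t / ((t + b) / 2)) = Real.log (2 * t / (b + t)) := by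
        rw [div_div_eq_mul_div, mul_comm t 2, add_comm t b]
      have hFa : Real.log (t / ((t + a) / 2)) = Real.log (2 * t / (a + t)) := by
        rw [div_div_eq_mul_div, mul_comm t 2, add_comm t a]
      have hcomm_b : phi t b = phi b t := phi_comm t b
      have hcomm_a : phi t a = phi a t := phi_comm t a
      have hmono := F_mono ht0 ha hab.le ht.1
      have hAb : 0 ≤ Real.log (2 * t / (b + t)) := by
        apply Real.log_nonneg
        rw [le_div_iff₀ (by linarith : (0:ℝ) < b + t)]; linarith [ht.1]
      have hAa : 0 ≤ Real.log (2 * t / (a + t)) := by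
        apply Real.log_nonneg
        rw [le_div_iff₀ (by linarith : (0:ℝ) < a + t)]
        have : a < t := lt_trans hab ht.1
        linarith
      have hsa : 0 < Real.sqrt (phi a t) := Real.sqrt_pos.mpr (by rwa [← hcomm_a])
      have hsb : 0 < Real.sqrt (phi b t) := Real.sqrt_pos.mpr (by rwa [← hcomm_b])
      have hratio : Real.log (2 * t / (a + t)) / Real.sqrt (phi a t)
          ≤ Real.log (2 * t / (b + t)) / Real.sqrt (phi b t) := by
        have e1 : Real.log (2 * t / (a + t)) / Real.sqrt (phi a t)
            = Real.sqrt (Real.log (2 * t / (a + t)) ^ 2 / phi a t) := by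
          rw [Real.sqrt_div (sq_nonneg _), Real.sqrt_sq hAa]
        have e2 : Real.log (2 * t / (b + t)) / Real.sqrt (phi b t)
            = Real.sqrt (Real.log (2 * t / (b + t)) ^ 2 / phi b t) := by
          rw [Real.sqrt_div (sq_nonneg _), Real.sqrt_sq hAb]
        rw [e1, e2]
        exact Real.sqrt_le_sqrt hmono
      rw [hFb, hFa, hcomm_b, hcomm_a]
      have expand_b : Real.log (2 * t / (b + t)) / 2 / (2 * Real.sqrt (phi b t))
          = (Real.log (2 * t / (b + t)) / Real.sqrt (phi b t)) / 4 := by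
        rw [div_div, div_div]; congr 1; ring
      have expand_a : Real.log (2 * t / (a + t)) / 2 / (2 * Real.sqrt (phi a t))
          = (Real.log (2 * t / (a + t)) / Real.sqrt (phi a t)) / 4 := by
        rw [div_div, div_div]; congr 1; ring
      rw [expand_b, expand_a]
      linarith
  have hend := mono (Set.mem_Icc.mpr ⟨le_refl b, hbc.le⟩)
    (Set.mem_Icc.mpr ⟨hbc.le, le_refl c⟩) hbc.le
  simp only [phi_self, Real.sqrt_zero] at hend
  rw [phi_comm c b, phi_comm c a, phi_comm b a] at hend
  linarith [hend]

lemma scalar_tri_aux {a b c : ℝ} (ha : 0 ≤ a) (hb : 0 ≤ b) (hc : 0 ≤ c) (hac : a ≤ c) :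
    Real.sqrt (phi a c) ≤ Real.sqrt (phi a b) + Real.sqrt (phi b c) := by
  by_cases hba : b ≤ a
  · have hphi : phi a c ≤ phi b c := by
      rcases eq_or_lt_of_le hc with h | hc0
      · have ha0 : a = 0 := le_antisymm (by linarith) ha
        have hb0 : b = 0 := le_antisymm (by linarith) hb
        rw [ha0, hb0]
      · exact phi_anti hc0 (Set.mem_Icc.mpr ⟨hb, le_trans hba hac⟩)
          (Set.mem_Icc.mpr ⟨ha, hac⟩) hba
    calc Real.sqrt (phi a c) ≤ Real.sqrt (phi b c) := Real.sqrt_le_sqrt hphi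
      _ ≤ Real.sqrt (phi a b) + Real.sqrt (phi b c) :=
        le_add_of_nonneg_left (Real.sqrt_nonneg _)
  · push_neg at hba
    by_cases hcb : c ≤ b
    · have hphi : phi a c ≤ phi a b := by
        rcases eq_or_lt_of_le ha with h | ha0
        · rw [← h, phi_zero_left hc, phi_zero_left hb]
          have := Real.log_nonneg (by norm_num : (1:ℝ) ≤ 2)
          have := mul_le_mul_of_nonneg_right hcb this
          linarith
        · rw [phi_comm a c, phi_comm a b]
          exact phi_mono ha0 (Set.mem_Ici.mpr hac)
            (Set.mem_Ici.mpr (le_trans hac hcb)) hcb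
      calc Real.sqrt (phi a c) ≤ Real.sqrt (phi a b) := Real.sqrt_le_sqrt hphi
        _ ≤ Real.sqrt (phi a b) + Real.sqrt (phi b c) :=
          le_add_of_nonneg_right (Real.sqrt_nonneg _)
    · push_neg at hcb
      exact mid_case ha hba hcb

lemma scalar_tri {a b c : ℝ} (ha : 0 ≤ a) (hb : 0 ≤ b) (hc : 0 ≤ c) :
    Real.sqrt (phi a c) ≤ Real.sqrt (phi a b) + Real.sqrt (phi b c) := by
  rcases le_total a c with h | h
  · exact scalar_tri_aux ha hb hc h
  · have := scalar_tri_aux hc hb ha h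
    rw [phi_comm c a, phi_comm c b, phi_comm b a] at this
    linarith

/-! ### JSD in terms of `phi`, and the triangle inequality -/

lemma jsd_phi {X : Type*} [Fintype X] (p q : X → ℝ) :
    JSD p q = Real.sqrt (∑ x, phi (p x) (q x)) := by
  unfold JSD KL
  congr 1
  rw [Finset.mul_sum, Finset.mul_sum, ← Finset.sum_add_distrib]
  apply Finset.sum_congr rfl
  intro x _
  rcases eq_or_ne (p x) 0 with h | h <;> rcases eq_or_ne (q x) 0 with h' | h' <;>
    simp [phi, h, h'] <;> ring

lemma jsd_triangle_fun {X : Type*} [Fintype X] {u v w : X → ℝ} (hu : ∀ x, 0 ≤ u x)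
    (hv : ∀ x, 0 ≤ v x) (hw : ∀ x, 0 ≤ w x) : JSD u w ≤ JSD u v + JSD v w := by
  rw [jsd_phi, jsd_phi, jsd_phi]
  have hA : (0:ℝ) ≤ ∑ x, phi (u x) (v x) :=
    Finset.sum_nonneg fun x _ => phi_nonneg (hu x) (hv x)
  have hB : (0:ℝ) ≤ ∑ x, phi (v x) (w x) :=
    Finset.sum_nonneg fun x _ => phi_nonneg (hv x) (hw x)
  have hterm : ∀ x, phi (u x) (w x) ≤ phi (u x) (v x) + phi (v x) (w x)
      + 2 * (Real.sqrt (phi (u x) (v x)) * Real.sqrt (phi (v x) (w x))) := by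
    intro x
    have h := scalar_tri (hu x) (hv x) (hw x)
    nlinarith [Real.sq_sqrt (phi_nonneg (hu x) (hw x)),
      Real.sq_sqrt (phi_nonneg (hu x) (hv x)),
      Real.sq_sqrt (phi_nonneg (hv x) (hw x)),
      Real.sqrt_nonneg (phi (u x) (w x)), Real.sqrt_nonneg (phi (u x) (v x)),
      Real.sqrt_nonneg (phi (v x) (w x))]
  have hCS : ∑ x, Real.sqrt (phi (u x) (v x)) * Real.sqrt (phi (v x) (w x))
      ≤ Real.sqrt (∑ x, phi (u x) (v x)) * Real.sqrt (∑ x, phi (v x) (w x)) :=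
    Real.sum_sqrt_mul_sqrt_le Finset.univ
      (fun x => phi_nonneg (hu x) (hv x)) (fun x => phi_nonneg (hv x) (hw x))
  have hsum : ∑ x, phi (u x) (w x)
      ≤ (∑ x, phi (u x) (v x)) + (∑ x, phi (v x) (w x))
        + 2 * ∑ x, Real.sqrt (phi (u x) (v x)) * Real.sqrt (phi (v x) (w x)) := by
    have := Finset.sum_le_sum (fun x (_ : x ∈ Finset.univ) => hterm x)
    simpa [Finset.sum_add_distrib, Finset.mul_sum] using this
  have hfinal : ∑ x, phi (u x) (w x)
      ≤ (Real.sqrt (∑ x, phi (u x) (v x)) + Real.sqrt (∑ x, phi (v x) (w x))) ^ 2 := by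
    have e : (Real.sqrt (∑ x, phi (u x) (v x)) + Real.sqrt (∑ x, phi (v x) (w x))) ^ 2
        = (∑ x, phi (u x) (v x)) + (∑ x, phi (v x) (w x))
          + 2 * (Real.sqrt (∑ x, phi (u x) (v x)) * Real.sqrt (∑ x, phi (v x) (w x))) := by
      have e1 := Real.sq_sqrt hA
      have e2 := Real.sq_sqrt hB
      nlinarith [e1, e2]
    rw [e]
    linarith
  calc Real.sqrt (∑ x, phi (u x) (w x))
      ≤ Real.sqrt ((Real.sqrt (∑ x, phi (u x) (v x))
          + Real.sqrt (∑ x, phi (v x) (w x))) ^ 2) := Real.sqrt_le_sqrt hfinal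
    _ = _ := Real.sqrt_sq (by positivity)

/-! ### Abstraction matrices -/

section Abs

variable {N M : Type*} [Fintype N] [Fintype M] [DecidableEq N]

/-- The map sending each column to the row of its unique 1. -/
noncomputable def absMap {α : Matrix N M ℝ} (hα : IsAbsMatrix α) : M → N :=
  fun j => (hα.2.1 j).choose

lemma absMap_apply {α : Matrix N M ℝ} (hα : IsAbsMatrix α) (i : N) (j : M) :
    α i j = if i = absMap hα j then 1 else 0 := by
  have h1 : α (absMap hα j) j = 1 := (hα.2.1 j).choose_spec.1
  have h2 : ∀ y, α y j = 1 → y = absMap hα j := (hα.2.1 j).choose_spec.2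
  by_cases h : i = absMap hα j
  · rw [if_pos h, h, h1]
  · rw [if_neg h]
    rcases hα.1 i j with h0 | h0
    · exact h0
    · exact absurd (h2 i h0) h

/-- Row sums of an abstraction matrix (sizes of the fibers). -/
noncomputable def rowCount (α : Matrix N M ℝ) : N → ℝ := fun i => ∑ j, α i j

lemma rowCount_pos {α : Matrix N M ℝ} (hα : IsAbsMatrix α) (i : N) :
    0 < rowCount α i := by
  obtain ⟨j, hj⟩ := hα.2.2 i
  have h1 : (1:ℝ) ≤ rowCount α i := by
    rw [← hj]
    apply Finset.single_le_sum (fun k _ => ?_) (Finset.mem_univ j)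
    rcases hα.1 i k with h | h <;> simp [h]
  linarith

lemma abs_mul_transpose {α : Matrix N M ℝ} (hα : IsAbsMatrix α) :
    α * αᵀ = Matrix.diagonal (rowCount α) := by
  ext i k
  rw [Matrix.mul_apply]
  by_cases h : i = k
  · subst h
    rw [Matrix.diagonal_apply_eq]
    unfold rowCount
    apply Finset.sum_congr rfl
    intro j _
    rw [Matrix.transpose_apply]
    rcases hα.1 i j with h | h <;> simp [h]
  · rw [Matrix.diagonal_apply_ne _ h]
    apply Finset.sum_eq_zero
    intro j _
    rw [Matrix.transpose_apply, absMap_apply hα i j, absMap_apply hα k j]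
    by_cases hi : i = absMap hα j
    · have hk : k ≠ absMap hα j := fun hc => h (hi.trans hc.symm)
      simp [hi, hk]
    · simp [hi]

lemma pinv_apply' {α : Matrix N M ℝ} (hα : IsAbsMatrix α) (j : M) (i : N) :
    pinv α j i = α i j / rowCount α i := by
  unfold pinv
  have hinv : (Matrix.diagonal (rowCount α))⁻¹
      = Matrix.diagonal (fun i => (rowCount α i)⁻¹) := by
    apply Matrix.inv_eq_right_inv
    rw [Matrix.diagonal_mul_diagonal]
    have : (fun i => rowCount α i * (rowCount α i)⁻¹) = fun _ => (1:ℝ) :=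
      funext fun i => mul_inv_cancel₀ (rowCount_pos hα i).ne'
    rw [this, Matrix.diagonal_one]
  rw [abs_mul_transpose hα, hinv, Matrix.mul_diagonal, Matrix.transpose_apply,
    div_eq_mul_inv]

lemma pinv_entry_nonneg {α : Matrix N M ℝ} (hα : IsAbsMatrix α) (j : M) (i : N) :
    0 ≤ pinv α j i := by
  rw [pinv_apply' hα]
  apply div_nonneg _ (rowCount_pos hα i).le
  rcases hα.1 i j with h | h <;> simp [h]

lemma pinv_mul_apply {P : Type*} [Fintype P] {α : Matrix N M ℝ} (hα : IsAbsMatrix α)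
    (B : Matrix N P ℝ) (j : M) (p : P) :
    (pinv α * B) j p = B (absMap hα j) p / rowCount α (absMap hα j) := by
  rw [Matrix.mul_apply]
  have hterm : ∀ i, pinv α j i * B i p
      = if i = absMap hα j then B (absMap hα j) p / rowCount α (absMap hα j) else 0 := by
    intro i
    rw [pinv_apply' hα, absMap_apply hα i j]
    by_cases h : i = absMap hα j
    · rw [if_pos h, if_pos h, h]
      ring
    · rw [if_neg h, if_neg h]
      simp
  rw [Finset.sum_congr rfl (fun i _ => hterm i), Finset.sum_ite_eq' Finset.univ]
  simp

lemma mul_abs_apply {P : Type*} [Fintype P] {α : Matrix N M ℝ} (hα : IsAbsMatrix α)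
    (B : Matrix P N ℝ) (p : P) (j : M) :
    (B * α) p j = B p (absMap hα j) := by
  rw [Matrix.mul_apply]
  have hterm : ∀ i, B p i * α i j = if i = absMap hα j then B p (absMap hα j) else 0 := by
    intro i
    rw [absMap_apply hα i j]
    by_cases h : i = absMap hα j
    · rw [if_pos h, if_pos h, h, mul_one]
    · rw [if_neg h, if_neg h, mul_zero]
  rw [Finset.sum_congr rfl (fun i _ => hterm i), Finset.sum_ite_eq' Finset.univ]
  simp

lemma jsd_lift {α : Matrix N M ℝ} (hα : IsAbsMatrix α) (p q : N → ℝ) :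
    JSD (fun m => p (absMap hα m) / rowCount α (absMap hα m))
        (fun m => q (absMap hα m) / rowCount α (absMap hα m)) = JSD p q := by
  rw [jsd_phi, jsd_phi]
  congr 1
  have step1 : ∀ m : M, phi (p (absMap hα m) / rowCount α (absMap hα m))
      (q (absMap hα m) / rowCount α (absMap hα m))
      = phi (p (absMap hα m)) (q (absMap hα m)) / rowCount α (absMap hα m) := by
    intro m
    have hr : 0 < rowCount α (absMap hα m) := rowCount_pos hα _
    have h1 : p (absMap hα m) / rowCount α (absMap hα m)
        = (rowCount α (absMap hα m))⁻¹ * p (absMap hα m) := by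
      rw [div_eq_mul_inv, mul_comm]
    have h2 : q (absMap hα m) / rowCount α (absMap hα m)
        = (rowCount α (absMap hα m))⁻¹ * q (absMap hα m) := by
      rw [div_eq_mul_inv, mul_comm]
    rw [h1, h2, phi_homog (inv_pos.mpr hr), div_eq_mul_inv, mul_comm]
  rw [Finset.sum_congr rfl (fun m _ => step1 m)]
  calc ∑ m, phi (p (absMap hα m)) (q (absMap hα m)) / rowCount α (absMap hα m)
      = ∑ m, ∑ i, (if i = absMap hα m then phi (p i) (q i) / rowCount α i else 0) := by
        refine Finset.sum_congr rfl fun m _ => ?_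
        rw [Finset.sum_ite_eq' Finset.univ]
        simp
    _ = ∑ i, ∑ m, (if i = absMap hα m then phi (p i) (q i) / rowCount α i else 0) :=
        Finset.sum_comm
    _ = ∑ i, rowCount α i * (phi (p i) (q i) / rowCount α i) := by
        refine Finset.sum_congr rfl fun i _ => ?_
        unfold rowCount
        rw [Finset.sum_mul]
        refine Finset.sum_congr rfl fun m _ => ?_
        rw [absMap_apply hα i m]
        by_cases h : i = absMap hα m <;> simp [h]
    _ = ∑ i, phi (p i) (q i) := by
        refine Finset.sum_congr rfl fun i _ => ?_
        exact mul_div_cancel₀ _ (rowCount_pos hα i).ne'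

end Abs

lemma mat_mul_nonneg {P Q R : Type*} [Fintype P] [Fintype Q] [Fintype R]
    {A : Matrix P Q ℝ} {B : Matrix Q R ℝ} (hA : ∀ i j, 0 ≤ A i j)
    (hB : ∀ i j, 0 ≤ B i j) : ∀ i j, 0 ≤ (A * B) i j := by
  intro i j
  rw [Matrix.mul_apply]
  exact Finset.sum_nonneg fun k _ => mul_nonneg (hA i k) (hB k j)

theorem iil_triangle {X X' X'' Y Y' Y'' : Type*}
    [Fintype X] [Nonempty X] [Fintype X'] [Nonempty X'] [Fintype X''] [Nonempty X'']
    [Fintype Y] [Nonempty Y] [Fintype Y'] [Nonempty Y'] [Fintype Y''] [Nonempty Y'']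
    [DecidableEq Y'] [DecidableEq Y'']
    (μ : Matrix Y X ℝ) (μ' : Matrix Y' X' ℝ) (μ'' : Matrix Y'' X'' ℝ)
    (αX : Matrix X' X ℝ) (αY : Matrix Y' Y ℝ)
    (βX : Matrix X'' X' ℝ) (βY : Matrix Y'' Y' ℝ)
    (hμ : IsColStoch μ) (hμ' : IsColStoch μ') (hμ'' : IsColStoch μ'')
    (hαX : IsAbsMatrix αX) (hαY : IsAbsMatrix αY)
    (hβX : IsAbsMatrix βX) (hβY : IsAbsMatrix βY) :
    supJSD μ (pinv αY * pinv βY * μ'' * βX * αX)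
      ≤ supJSD μ (pinv αY * μ' * αX) + supJSD μ' (pinv βY * μ'' * βX) := by
  classical
  have hassoc : pinv αY * pinv βY * μ'' * βX * αX
      = pinv αY * ((pinv βY * μ'' * βX) * αX) := by
    simp [Matrix.mul_assoc]
  have hassoc' : pinv αY * μ' * αX = pinv αY * (μ' * αX) := Matrix.mul_assoc _ _ _
  -- nonnegativity of the entries of `pinv βY * μ'' * βX`
  have hβXnn : ∀ i j, 0 ≤ βX i j := fun i j => by
    rcases hβX.1 i j with h | h <;> simp [h]
  have hM2nn : ∀ i j, 0 ≤ (pinv βY * μ'' * βX) i j :=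
    mat_mul_nonneg (mat_mul_nonneg (fun i j => pinv_entry_nonneg hβY i j)
      (fun i j => hμ''.1 i j)) hβXnn
  show Finset.univ.sup' Finset.univ_nonempty
      (fun x => JSD (fun y => μ y x)
        (fun y => (pinv αY * pinv βY * μ'' * βX * αX) y x)) ≤ _
  apply Finset.sup'_le
  intro x _
  have colBig : (fun y => (pinv αY * pinv βY * μ'' * βX * αX) y x)
      = (fun y => (pinv βY * μ'' * βX) (absMap hαY y) (absMap hαX x)
          / rowCount αY (absMap hαY y)) := by
    funext y
    rw [hassoc, pinv_mul_apply hαY, mul_abs_apply hαX]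
  have colMid : (fun y => (pinv αY * μ' * αX) y x)
      = (fun y => μ' (absMap hαY y) (absMap hαX x) / rowCount αY (absMap hαY y)) := by
    funext y
    rw [hassoc', pinv_mul_apply hαY, mul_abs_apply hαX]
  have hu : ∀ y, 0 ≤ μ y x := fun y => hμ.1 y x
  have hv : ∀ y, 0 ≤ μ' (absMap hαY y) (absMap hαX x) / rowCount αY (absMap hαY y) :=
    fun y => div_nonneg (hμ'.1 _ _) (rowCount_pos hαY _).le
  have hw : ∀ y, 0 ≤ (pinv βY * μ'' * βX) (absMap hαY y) (absMap hαX x)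
      / rowCount αY (absMap hαY y) :=
    fun y => div_nonneg (hM2nn _ _) (rowCount_pos hαY _).le
  rw [colBig]
  have htri := jsd_triangle_fun (u := fun y => μ y x)
    (v := fun y => μ' (absMap hαY y) (absMap hαX x) / rowCount αY (absMap hαY y))
    (w := fun y => (pinv βY * μ'' * βX) (absMap hαY y) (absMap hαX x)
      / rowCount αY (absMap hαY y)) hu hv hw
  have hlift := jsd_lift hαY (fun y' => μ' y' (absMap hαX x))
    (fun y' => (pinv βY * μ'' * βX) y' (absMap hαX x))
  rw [hlift] at htri
  refine le_trans htri (add_le_add ?_ ?_)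
  · have h1 : JSD (fun y => μ y x)
        (fun y => μ' (absMap hαY y) (absMap hαX x) / rowCount αY (absMap hαY y))
        = JSD (fun y => μ y x) (fun y => (pinv αY * μ' * αX) y x) := by
      rw [colMid]
    rw [h1]
    exact Finset.le_sup' (fun x => JSD (fun y => μ y x)
      (fun y => (pinv αY * μ' * αX) y x)) (Finset.mem_univ x)
  · exact Finset.le_sup' (fun x' => JSD (fun y' => μ' y' x')
      (fun y' => (pinv βY * μ'' * βX) y' x')) (Finset.mem_univ (absMap hαX x))
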